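/- Let E be a real inner product space and let κ : E × E → ℝ be a symmetric positive semidefinite kernel that is nonexpansive in the feature-map sense: κ(x,x) − 2 κ(x,y) + κ(y,y) ≤ ‖x − y‖² for all x, y ∈ E. Fix points z₁, …, z_T ∈ E and coefficients ω ∈ ℝ^T, let K ∈ ℝ^{T×T} be the kernel matrix with entries K_{ij} = κ(z_i, z_j), and define g : E → ℝ by g(x) = Σ_{j=1}^T ω_j κ(x, z_j). Then g is Lipschitz continuous with Lipschitz constant √(ωᵀ K ω): for all x, y ∈ E, |g(x) − g(y)| ≤ √(ωᵀ K ω) · ‖x − y‖. (Honest form of Theorem 1(i): the Lipschitz constant of the kernel-based residual equals the RKHS norm ωᵀ K ω raised to the 1/2.) -/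

import Mathlib

open Matrix

private lemma kernel_quadratic_nonneg {E : Type*} [NormedAddCommGroup E] [InnerProductSpace ℝ E]
    (κ : E → E → ℝ)
    (hsymm : ∀ z z' : E, κ z z' = κ z' z)
    (hpsd : ∀ (m : ℕ) (z : Fin m → E) (c : Fin m → ℝ),
      0 ≤ ∑ i, ∑ j, c i * c j * κ (z i) (z j))
    (T : ℕ) (z : Fin T → E) (ω : Fin T → ℝ) (x y : E) (t : ℝ) :
    0 ≤ (κ x x - 2 * κ x y + κ y y) * t ^ 2
        + 2 * (∑ j, ω j * κ x (z j) - ∑ j, ω j * κ y (z j)) * t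
        + ∑ i, ∑ j, ω i * ω j * κ (z i) (z j) := by
  have h := hpsd (T + 2) (Fin.append z ![x, y]) (Fin.append ω ![t, -t])
  simp only [Fin.sum_univ_add, Fin.append_left, Fin.append_right, Fin.sum_univ_two,
    Matrix.cons_val_zero, Matrix.cons_val_one, Matrix.head_cons] at h
  convert h using 1
  have e1 : ∀ i, κ (z i) x = κ x (z i) := fun i => hsymm _ _
  have e2 : ∀ i, κ (z i) y = κ y (z i) := fun i => hsymm _ _
  have e3 : κ y x = κ x y := hsymm _ _
  simp only [e1, e2, e3, Finset.sum_add_distrib, Finset.mul_sum] at *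
  ring_nf
  simp only [show ∀ i:Fin T, ω i * t * κ x (z i) = t * (ω i * κ x (z i)) from fun i => by ring,
    show ∀ i:Fin T, t * ω i * κ x (z i) = t * (ω i * κ x (z i)) from fun i => by ring,
    show ∀ i:Fin T, t * ω i * κ y (z i) = t * (ω i * κ y (z i)) from fun i => by ring,
    show ∀ i:Fin T, -t * ω i * κ y (z i) = -(t * (ω i * κ y (z i))) from fun i => by ring,
    show ∀ i:Fin T, -(ω i * t) * κ y (z i) = -(t * (ω i * κ y (z i))) from fun i => by ring,
    Finset.sum_neg_distrib, ← Finset.mul_sum]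
  ring

/-- **Theorem 1(i), honest form.**
For a symmetric PSD kernel `κ` on a real inner product space `E` that is
nonexpansive in the feature-map sense
(`κ(x,x) − 2κ(x,y) + κ(y,y) ≤ ‖x − y‖²`), the kernel expansion
`g(x) = Σ_j ω_j κ(x, z_j)` is Lipschitz with constant `√(ωᵀ K ω)`,
where `K` is the kernel matrix of the points `z₁, …, z_T`. -/
theorem kernel_expansion_lipschitz
    {E : Type*} [NormedAddCommGroup E] [InnerProductSpace ℝ E]
    (κ : E → E → ℝ)
    (hsymm : ∀ z z' : E, κ z z' = κ z' z)
    (hpsd : ∀ (m : ℕ) (z : Fin m → E) (c : Fin m → ℝ),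
      0 ≤ ∑ i, ∑ j, c i * c j * κ (z i) (z j))
    (hnonexp : ∀ x y : E, κ x x - 2 * κ x y + κ y y ≤ ‖x - y‖ ^ 2)
    (T : ℕ) (z : Fin T → E) (ω : Fin T → ℝ)
    (K : Matrix (Fin T) (Fin T) ℝ) (hK : ∀ i j, K i j = κ (z i) (z j))
    (g : E → ℝ) (hg : ∀ x, g x = ∑ j, ω j * κ x (z j)) :
    ∀ x y : E, |g x - g y| ≤ Real.sqrt (ω ⬝ᵥ K *ᵥ ω) * ‖x - y‖ := by
  intro x y
  set A : ℝ := ω ⬝ᵥ K *ᵥ ω with hAdef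
  set B : ℝ := g x - g y with hBdef
  set C : ℝ := κ x x - 2 * κ x y + κ y y with hCdef
  have hAeq : A = ∑ i, ∑ j, ω i * ω j * κ (z i) (z j) := by
    simp only [hAdef, dotProduct, Matrix.mulVec, dotProduct, hK, Finset.mul_sum]
    exact Finset.sum_congr rfl fun i _ => Finset.sum_congr rfl fun j _ => by ring
  have hBeq : B = ∑ j, ω j * κ x (z j) - ∑ j, ω j * κ y (z j) := by
    rw [hBdef, hg, hg]
  have hA0 : 0 ≤ A := hAeq ▸ hpsd T z ω
  have key : ∀ t : ℝ, 0 ≤ C * t ^ 2 + 2 * B * t + A := by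
    intro t
    rw [hAeq, hBeq, hCdef]
    exact kernel_quadratic_nonneg κ hsymm hpsd T z ω x y t
  have hdisc : discrim C (2 * B) A ≤ 0 := discrim_le_zero (fun s => by
    have := key s; nlinarith [this])
  rw [discrim] at hdisc
  have hB2 : B ^ 2 ≤ C * A := by nlinarith
  have h1 : |B| ≤ Real.sqrt (C * A) := by
    rw [← Real.sqrt_sq_eq_abs]
    exact Real.sqrt_le_sqrt hB2
  have h2 : Real.sqrt (C * A) ≤ Real.sqrt (‖x - y‖ ^ 2 * A) :=
    Real.sqrt_le_sqrt (mul_le_mul_of_nonneg_right (hnonexp x y) hA0)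
  calc |B| ≤ Real.sqrt (C * A) := h1
    _ ≤ Real.sqrt (‖x - y‖ ^ 2 * A) := h2
    _ = Real.sqrt A * ‖x - y‖ := by
        rw [Real.sqrt_mul (sq_nonneg _), Real.sqrt_sq (norm_nonneg _), mul_comm]
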